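/- For all integers n and r with 0 ≤ r ≤ n−1, the cardinality of B⁺(n,r) equals U(n,r). -/

import Mathlib

open Finset

/-- A letter for arrangements: white, black, or decorated. -/
inductive Letter : Type
  | white : Letter
  | black : Letter
  | decorated : Letter
  deriving DecidableEq

/-- `B n r`: words of length `n` over `Letter` with exactly `r` black letters
whose last letter is not black. -/
def B (n r : ℕ) : Set (List Letter) :=
  {w | w.length = n ∧ w.count Letter.black = r ∧ w.getLast? ≠ some Letter.black}

/-- `B⁺ n r`: members of `B n r` containing a decorated letter strictly to the
right of the last black letter. -/
def Bplus (n r : ℕ) : Set (List Letter) :=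
  {w | w ∈ B n r ∧ ∃ a b : List Letter, w = a ++ Letter.decorated :: b ∧ Letter.black ∉ b}

/-- `U n r = ∑_{j=r+1}^{n} C(j−1,r)·2^{j−1−r}`. -/
def U (n r : ℕ) : ℕ := ∑ j ∈ Icc (r + 1) n, (j - 1).choose r * 2 ^ (j - 1 - r)

instance : Fintype Letter :=
  ⟨{Letter.white, Letter.black, Letter.decorated}, by intro x; cases x <;> simp⟩

/-- Words of length `n` with exactly `r` black letters. -/
def Arr (n r : ℕ) : Set (List Letter) :=
  {v | v.length = n ∧ v.count Letter.black = r}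

lemma Arr_finite (n r : ℕ) : (Arr n r).Finite :=
  (List.finite_length_eq Letter n).subset fun _ h => h.1

lemma Bplus_finite (n r : ℕ) : (Bplus n r).Finite :=
  (List.finite_length_eq Letter n).subset fun _ h => h.1.1

lemma cons_inj (c : Letter) : Function.Injective (c :: · : List Letter → List Letter) :=
  fun _ _ h => by simpa using h

lemma concat_inj (c : Letter) : Function.Injective (· ++ [c] : List Letter → List Letter) :=
  fun _ _ h => by simpa using h

lemma Arr_succ_zero (n : ℕ) :
    Arr (n+1) 0 = (Letter.white :: ·) '' Arr n 0 ∪ (Letter.decorated :: ·) '' Arr n 0 := by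
  ext w
  constructor
  · rintro ⟨hl, hc⟩
    cases w with
    | nil => simp at hl
    | cons c v =>
      simp only [List.length_cons, Nat.succ_inj] at hl
      cases c with
      | white =>
        left; exact ⟨v, ⟨hl, by simpa [List.count_cons] using hc⟩, rfl⟩
      | black => simp [List.count_cons] at hc
      | decorated =>
        right; exact ⟨v, ⟨hl, by simpa [List.count_cons] using hc⟩, rfl⟩
  · rintro (⟨v, ⟨hl, hc⟩, rfl⟩ | ⟨v, ⟨hl, hc⟩, rfl⟩) <;>
      exact ⟨by simp [hl], by simp [List.count_cons, hc]⟩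

lemma Arr_succ_succ (n r : ℕ) :
    Arr (n+1) (r+1) = (Letter.black :: ·) '' Arr n r ∪
      ((Letter.white :: ·) '' Arr n (r+1) ∪ (Letter.decorated :: ·) '' Arr n (r+1)) := by
  ext w
  constructor
  · rintro ⟨hl, hc⟩
    cases w with
    | nil => simp at hl
    | cons c v =>
      simp only [List.length_cons, Nat.succ_inj] at hl
      cases c with
      | white =>
        right; left; exact ⟨v, ⟨hl, by simpa [List.count_cons] using hc⟩, rfl⟩
      | black =>
        left; exact ⟨v, ⟨hl, by simp [List.count_cons] at hc; omega⟩, rfl⟩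
      | decorated =>
        right; right; exact ⟨v, ⟨hl, by simpa [List.count_cons] using hc⟩, rfl⟩
  · rintro (⟨v, ⟨hl, hc⟩, rfl⟩ | ⟨v, ⟨hl, hc⟩, rfl⟩ | ⟨v, ⟨hl, hc⟩, rfl⟩) <;>
      exact ⟨by simp [hl], by simp [List.count_cons, hc]⟩

lemma head_mem_image (c : Letter) (s : Set (List Letter)) (w : List Letter)
    (h : w ∈ (c :: ·) '' s) : w.head? = some c := by
  rcases h with ⟨v, _, rfl⟩; rfl

lemma disj_head (c d : Letter) (hcd : c ≠ d) (s t : Set (List Letter)) :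
    Disjoint ((c :: ·) '' s) ((d :: ·) '' t) := by
  rw [Set.disjoint_left]
  rintro w ⟨v, -, rfl⟩ ⟨u, -, h⟩
  injection h with h1 _
  exact hcd h1.symm

lemma Arr_ncard (n r : ℕ) : (Arr n r).ncard = n.choose r * 2 ^ (n - r) := by
  induction n generalizing r with
  | zero =>
    cases r with
    | zero =>
      have : Arr 0 0 = {([] : List Letter)} := by
        ext v; simp [Arr, List.length_eq_zero_iff]
        rintro rfl; simp
      simp [this]
    | succ r =>
      have : Arr 0 (r+1) = ∅ := by
        ext v; simp [Arr, List.length_eq_zero_iff]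
        rintro rfl; simp
      simp [this]
  | succ n ih =>
    cases r with
    | zero =>
      rw [Arr_succ_zero, Set.ncard_union_eq (disj_head _ _ (by simp) _ _)
          (((Arr_finite n 0).image _)) (((Arr_finite n 0).image _)),
        Set.ncard_image_of_injective _ (cons_inj _),
        Set.ncard_image_of_injective _ (cons_inj _), ih]
      simp [pow_succ]; ring
    | succ r =>
      rw [Arr_succ_succ,
        Set.ncard_union_eq (by
          apply Set.disjoint_union_right.mpr
          exact ⟨disj_head _ _ (by simp) _ _, disj_head _ _ (by simp) _ _⟩)
          ((Arr_finite n r).image _)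
          (((Arr_finite n (r+1)).image _).union ((Arr_finite n (r+1)).image _)),
        Set.ncard_union_eq (disj_head _ _ (by simp) _ _)
          ((Arr_finite n (r+1)).image _) ((Arr_finite n (r+1)).image _),
        Set.ncard_image_of_injective _ (cons_inj _),
        Set.ncard_image_of_injective _ (cons_inj _),
        Set.ncard_image_of_injective _ (cons_inj _), ih, ih]
      rw [Nat.choose_succ_succ]
      rcases le_or_gt (r+1) n with hle | hlt
      · have h2 : n + 1 - (r + 1) = n - r := by omega
        have e : (2:ℕ) ^ (n - r) = 2 ^ (n - (r+1)) * 2 := by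
          rw [← pow_succ]; congr 1; omega
        rw [h2, e]
        ring
      · have hc : n.choose (r+1) = 0 := Nat.choose_eq_zero_of_lt hlt
        have h2 : n + 1 - (r + 1) = n - r := by omega
        rw [hc, h2]
        ring

lemma getLast_ne_black {w a b : List Letter}
    (hw : w = a ++ Letter.decorated :: b) (hb : Letter.black ∉ b) :
    w.getLast? ≠ some Letter.black := by
  subst hw
  intro h
  rw [List.getLast?_append] at h
  have hx : (Letter.decorated :: b).getLast? = some Letter.black := by
    cases hy : (Letter.decorated :: b).getLast? with
    | none => simp at hy
    | some x => rw [hy, Option.some_or] at h; exact h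
  obtain ⟨hne, heq⟩ := List.mem_getLast?_eq_getLast (show Letter.black ∈ _ from hx)
  have hm := List.getLast_mem hne
  rw [← heq] at hm
  simp at hm
  exact hb hm

lemma Bplus_succ (n r : ℕ) :
    Bplus (n+1) r = (· ++ [Letter.white]) '' Bplus n r ∪
      (· ++ [Letter.decorated]) '' Arr n r := by
  ext w
  constructor
  · rintro ⟨⟨hl, hc, hlast⟩, a, b, hw, hb⟩
    rcases List.eq_nil_or_concat w with rfl | ⟨v, c, hvc⟩
    · simp at hl
    rw [List.concat_eq_append] at hvc
    subst hvc
    have hlen : v.length = n := by simpa using hl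
    have hlv : (v ++ [c]).getLast? = some c := by simp
    cases c with
    | black => exact absurd hlv hlast
    | decorated =>
      right
      exact ⟨v, ⟨hlen, by simpa [List.count_append] using hc⟩, rfl⟩
    | white =>
      left
      -- b must end with white; peel it off
      have hbne : b ≠ [] := by
        rintro rfl
        rw [hw] at hlv
        simp at hlv
      rcases List.eq_nil_or_concat b with rfl | ⟨b', d, hbd⟩
      · exact absurd rfl hbne
      rw [List.concat_eq_append] at hbd
      subst hbd
      have hw' : v ++ [Letter.white] = (a ++ Letter.decorated :: b') ++ [d] := by
        rw [hw]; simp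
      have hd : d = Letter.white := by
        have h5 := congrArg List.getLast? hw'
        rw [List.getLast?_concat, List.getLast?_concat] at h5
        injection h5 with h6
        exact h6.symm
      subst hd
      have hv : v = a ++ Letter.decorated :: b' := by
        exact List.append_cancel_right hw'
      have hb' : Letter.black ∉ b' := fun h => hb (by simp [h])
      refine ⟨v, ⟨⟨hlen, ?_, getLast_ne_black hv hb'⟩, a, b', hv, hb'⟩, rfl⟩
      simpa [List.count_append] using hc
  · rintro (⟨v, ⟨⟨hl, hc, hlast⟩, a, b, rfl, hb⟩, rfl⟩ | ⟨v, ⟨hl, hc⟩, rfl⟩)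
    · refine ⟨⟨by simp at hl ⊢; omega, by simpa [List.count_append] using hc,
        by rw [List.getLast?_concat]; simp⟩,
        a, b ++ [Letter.white], by simp, ?_⟩
      simp [hb]
    · exact ⟨⟨by simp [hl], by simpa [List.count_append] using hc,
        by rw [List.getLast?_concat]; simp⟩,
        v, [], by simp, by simp⟩

lemma last_mem_image (c : Letter) (s : Set (List Letter)) (w : List Letter)
    (h : w ∈ (· ++ [c]) '' s) : w.getLast? = some c := by
  rcases h with ⟨v, _, rfl⟩; simp

lemma Bplus_ncard (n r : ℕ) : (Bplus n r).ncard = U n r := by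
  induction n with
  | zero =>
    have he : Bplus 0 r = ∅ := by
      ext w
      simp only [Bplus, B, Set.mem_setOf_eq, Set.mem_empty_iff_false, iff_false, not_and]
      rintro ⟨hl, -, -⟩ ⟨a, b, hw, -⟩
      rw [List.length_eq_zero_iff] at hl
      subst hl
      exact absurd hw (by simp)
    rw [he]
    have : U 0 r = 0 := by
      rw [U, show Finset.Icc (r+1) 0 = ∅ from Finset.Icc_eq_empty (by omega),
        Finset.sum_empty]
    simp [this]
  | succ n ih =>
    rw [Bplus_succ,
      Set.ncard_union_eq (by
        rw [Set.disjoint_left]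
        intro w h1 h2
        have e1 := last_mem_image _ _ _ h1
        have e2 := last_mem_image _ _ _ h2
        rw [e1] at e2
        simp at e2)
        ((Bplus_finite n r).image _) ((Arr_finite n r).image _),
      Set.ncard_image_of_injective _ (concat_inj _),
      Set.ncard_image_of_injective _ (concat_inj _), ih, Arr_ncard]
    rcases le_or_gt (r+1) (n+1) with hle | hlt
    · rw [U, U, Finset.sum_Icc_succ_top hle]
      simp
    · have hc : n.choose r = 0 := Nat.choose_eq_zero_of_lt (by omega)
      have : Finset.Icc (r+1) (n+1) = Finset.Icc (r+1) n := by
        rw [Finset.Icc_eq_empty (by omega), Finset.Icc_eq_empty (by omega)]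
      rw [U, U, this, hc]
      simp

theorem card_Bplus_eq_U (n r : ℕ) (h : r + 1 ≤ n) : (Bplus n r).ncard = U n r :=
  Bplus_ncard n r
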